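/- Let β > 0, μ > 0 and λ ∈ (0, μ²), and set t = √(μ² − λ). Then sinh μ · (λ·sinh t − β·t·cosh t) + β·μ·cosh μ·sinh t > 0. -/

import Mathlib

open Real

lemma sinh_convexOn : ConvexOn ℝ (Set.Ici (0:ℝ)) Real.sinh := by
  apply convexOn_of_deriv2_nonneg (convex_Ici 0)
    Real.continuous_sinh.continuousOn
    Real.differentiable_sinh.differentiableOn
  · simp only [Real.deriv_sinh]
    exact Real.differentiable_cosh.differentiableOn
  · intro x hx
    rw [interior_Ici] at hx
    simp only [Function.iterate_succ, Function.iterate_zero, Function.comp_apply, id,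
      Real.deriv_sinh, Real.deriv_cosh]
    exact (Real.sinh_pos_iff.2 hx).le

lemma key_sinh (a b : ℝ) (hb : 0 ≤ b) (hba : b ≤ a) :
    a * Real.sinh b ≤ b * Real.sinh a := by
  rcases eq_or_lt_of_le (hb.trans hba) with h | ha
  · have : a = 0 := h.symm
    have : b = 0 := le_antisymm (hba.trans_eq this) hb
    simp [this, ‹a = 0›]
  · have h1 : b = (b/a) • a + (1 - b/a) • (0:ℝ) := by
      field_simp
      rw [smul_eq_mul, smul_eq_mul, mul_zero, add_zero, div_mul_cancel₀ _ ha.ne']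
    have hw1 : 0 ≤ b/a := div_nonneg hb ha.le
    have hw2 : 0 ≤ 1 - b/a := by
      rw [sub_nonneg, div_le_one ha]; exact hba
    have := sinh_convexOn.2 (Set.mem_Ici.2 ha.le) (Set.mem_Ici.2 le_rfl) hw1 hw2
      (by ring : b/a + (1 - b/a) = 1)
    rw [← h1, Real.sinh_zero] at this
    have : Real.sinh b ≤ b/a * Real.sinh a := by
      simpa using this
    calc a * Real.sinh b ≤ a * (b/a * Real.sinh a) := by
          exact mul_le_mul_of_nonneg_left this ha.le
      _ = b * Real.sinh a := by field_simp

/-- Strict positivity of sinh μ·(λ sinh t − β t cosh t) + β μ cosh μ sinh t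
on 0 < λ < μ², where t = √(μ² − λ). -/
theorem stmt_9 (β μ lam : ℝ) (hβ : 0 < β) (hμ : 0 < μ)
    (hlam : lam ∈ Set.Ioo (0 : ℝ) (μ ^ 2)) :
    0 < Real.sinh μ * (lam * Real.sinh (Real.sqrt (μ ^ 2 - lam))
        - β * Real.sqrt (μ ^ 2 - lam) * Real.cosh (Real.sqrt (μ ^ 2 - lam)))
      + β * μ * Real.cosh μ * Real.sinh (Real.sqrt (μ ^ 2 - lam)) := by
  obtain ⟨hl0, hl1⟩ := hlam
  set t := Real.sqrt (μ ^ 2 - lam) with ht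
  have ht0 : 0 < t := Real.sqrt_pos.2 (by linarith)
  have ht2 : t ^ 2 = μ ^ 2 - lam := Real.sq_sqrt (by linarith)
  have htμ : t < μ := by
    nlinarith [ht0]
  -- key inequality: t * sinh μ * cosh t ≤ μ * cosh μ * sinh t
  have key := key_sinh (μ + t) (μ - t) (by linarith) (by linarith)
  rw [Real.sinh_add, Real.sinh_sub] at key
  have h2 : t * Real.cosh t * Real.sinh μ ≤ μ * Real.cosh μ * Real.sinh t := by
    linarith [key]
  have hsμ : 0 < Real.sinh μ := Real.sinh_pos_iff.2 hμ
  have hst : 0 < Real.sinh t := Real.sinh_pos_iff.2 ht0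
  have A : 0 < lam * Real.sinh μ * Real.sinh t := mul_pos (mul_pos hl0 hsμ) hst
  have B : β * (t * Real.cosh t * Real.sinh μ) ≤ β * (μ * Real.cosh μ * Real.sinh t) :=
    mul_le_mul_of_nonneg_left h2 hβ.le
  linarith [A, B]
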